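/- arXiv:2301.05185 — 4 statements merged into one kernel-verified Lean document; each statement's English description precedes it below -/
import Mathlib

section
/- Let d ≥ 1 and n ≥ 1 be integers and let Ψ = (ψ_i)_{i≥1} be a sequence of reals with 0 < ψ_i < 1 for all i. If 𝔰 and 𝔯 are two distinct elements of S_n, then the closed cubes Q̄(P^n_Ψ(𝔰), ℓ^n_Ψ) and Q̄(P^n_Ψ(𝔯), ℓ^n_Ψ) are disjoint. -/
open MeasureTheory Set Filter
open scoped ENNReal NNReal

noncomputable section

/-- The closed cube of side `l` centered at `c` in `ℝ^d`. -/
def cubeC (d : ℕ) (c : EuclideanSpace ℝ (Fin d)) (l : ℝ) : Set (EuclideanSpace ℝ (Fin d)) :=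
  {x | ∀ j, |x j - c j| ≤ l / 2}

/-- The open cube of side `l` centered at `c` in `ℝ^d`. -/
def cubeO (d : ℕ) (c : EuclideanSpace ℝ (Fin d)) (l : ℝ) : Set (EuclideanSpace ℝ (Fin d)) :=
  {x | ∀ j, |x j - c j| < l / 2}

/-- A finite string `(s_1, …, s_n)` of elements of `{−1,1}^d`, encoded as a real-valued
function all of whose values are `±1`. -/
def IsSignStr {d n : ℕ} (s : Fin n → Fin d → ℝ) : Prop := ∀ i j, s i j = 1 ∨ s i j = -1

/-- An infinite sequence `(s_1, s_2, …)` of elements of `{−1,1}^d` (the set `𝒮`). -/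
def IsSignSeq {d : ℕ} (s : ℕ → Fin d → ℝ) : Prop := ∀ i j, s i j = 1 ∨ s i j = -1

/-- `ℓ^n_Ψ = (∏_{i=1}^n ψ_i)/2^n`; here `Ψ i` stands for `ψ_{i+1}`. -/
def ell (Ψ : ℕ → ℝ) (n : ℕ) : ℝ := (∏ i ∈ Finset.range n, Ψ i) / 2 ^ n

/-- `P^n_Ψ(𝔰)`, with coordinates `1/2 + (1/4) ∑_{i=1}^n s_i^j ℓ^{i−1}_Ψ`. -/
def Pfin (d : ℕ) (Ψ : ℕ → ℝ) {n : ℕ} (s : Fin n → Fin d → ℝ) : EuclideanSpace ℝ (Fin d) :=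
  WithLp.toLp 2 (fun j => 1 / 2 + (1 / 4) * ∑ i, s i j * ell Ψ i)

/-- `𝒫_Ψ(𝔰)`, with coordinates `1/2 + (1/4) ∑_{i=1}^∞ s_i^j ℓ^{i−1}_Ψ`. -/
def Pinf (d : ℕ) (Ψ : ℕ → ℝ) (s : ℕ → Fin d → ℝ) : EuclideanSpace ℝ (Fin d) :=
  WithLp.toLp 2 (fun j => 1 / 2 + (1 / 4) * ∑' i, s i j * ell Ψ i)

/-- The constant sequence `Θ` of `1`s. -/
def Theta : ℕ → ℝ := fun _ => 1

/-- The constant sequence `Φ` with `ψ_i = 2^{−ν}`. -/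
def Phi (ν : ℝ) : ℕ → ℝ := fun _ => (2 : ℝ) ^ (-ν)

/-- `P̃^{n+1}_Ψ(𝔰) = P^{n+1}_Ψ(𝔰) − P^n_Ψ(𝔰′) + P^n_Θ(𝔰′)` (for `n = 0` this is `P^1_Ψ`). -/
def Ptilde (d : ℕ) (Ψ : ℕ → ℝ) {n : ℕ} (s : Fin (n + 1) → Fin d → ℝ) :
    EuclideanSpace ℝ (Fin d) :=
  Pfin d Ψ s - Pfin d Ψ (fun i : Fin n => s i.castSucc) +
    Pfin d Theta (fun i : Fin n => s i.castSucc)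

/-- The Cantor set `𝒞_Ψ = ⋂_{n≥1} ⋃_{𝔰 ∈ S_n} Q̄(P^n_Ψ(𝔰), ℓ^n_Ψ)`. -/
def CantorSet (d : ℕ) (Ψ : ℕ → ℝ) : Set (EuclideanSpace ℝ (Fin d)) :=
  ⋂ n : ℕ, ⋃ (s : Fin (n + 1) → Fin d → ℝ) (_ : IsSignStr s),
    cubeC d (Pfin d Ψ s) (ell Ψ (n + 1))

/-- The closed unit cube `[0,1]^d`. -/
def unitCubeIcc (d : ℕ) : Set (EuclideanSpace ℝ (Fin d)) := {x | ∀ j, x j ∈ Icc (0 : ℝ) 1}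

/-- The half-open unit cube `[0,1)^d`. -/
def unitCubeIco (d : ℕ) : Set (EuclideanSpace ℝ (Fin d)) := {x | ∀ j, x j ∈ Ico (0 : ℝ) 1}

/-- The open unit cube `(0,1)^d`. -/
def unitCubeIoo (d : ℕ) : Set (EuclideanSpace ℝ (Fin d)) := {x | ∀ j, x j ∈ Ioo (0 : ℝ) 1}

/-- `τ_i = (1 − 2^{−(1−β)i})/(2^{1−β} − 1)`. -/
def tau (β : ℝ) (i : ℕ) : ℝ := (1 - (2 : ℝ) ^ (-((1 - β) * i))) / ((2 : ℝ) ^ (1 - β) - 1)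

/-- `τ_∞ = 1/(2^{1−β} − 1)`. -/
def tauInf (β : ℝ) : ℝ := ((2 : ℝ) ^ (1 - β) - 1)⁻¹

/-- `γ` is a trajectory of the (time-dependent) vector field `u` on `[0,T]` starting at `x`:
`γ 0 = x` and `γ′(t) = u(t, γ(t))` for all `t ∈ [0,T]` (one-sided at the endpoints). -/
def IsTrajectoryOn (d : ℕ) (u : ℝ → EuclideanSpace ℝ (Fin d) → EuclideanSpace ℝ (Fin d))
    (T : ℝ) (x : EuclideanSpace ℝ (Fin d)) (γ : ℝ → EuclideanSpace ℝ (Fin d)) : Prop :=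
  γ 0 = x ∧ ∀ t ∈ Icc 0 T, HasDerivWithinAt γ (u t (γ t)) (Icc 0 T) t

/-- The integer lattice vector `k ∈ ℤ^d` viewed as a point of `ℝ^d`. -/
def intVec (d : ℕ) (k : Fin d → ℤ) : EuclideanSpace ℝ (Fin d) := WithLp.toLp 2 (fun i => (k i : ℝ))

lemma ell_pos' (Ψ : ℕ → ℝ) (hΨ : ∀ i, Ψ i ∈ Set.Ioo (0:ℝ) 1) (k : ℕ) : 0 < ell Ψ k := by
  unfold ell
  exact div_pos (Finset.prod_pos fun i _ => (hΨ i).1) (by positivity)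

lemma ell_succ' (Ψ : ℕ → ℝ) (k : ℕ) : ell Ψ (k+1) = ell Ψ k * (Ψ k / 2) := by
  unfold ell
  rw [Finset.prod_range_succ, pow_succ]
  ring

lemma ell_key (Ψ : ℕ → ℝ) (hΨ : ∀ i, Ψ i ∈ Set.Ioo (0:ℝ) 1) (m : ℕ) :
    ∀ n, m < n → (∑ i ∈ Finset.Ico (m+1) n, ell Ψ i) + 2 * ell Ψ n < ell Ψ m := by
  intro n hn
  induction n with
  | zero => omega
  | succ n ih =>
    rcases Nat.lt_or_ge m n with h | h
    · have h1 := ih h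
      rw [Finset.sum_Ico_succ_top (by omega)]
      have h2 : 2 * ell Ψ (n+1) < ell Ψ n := by
        rw [ell_succ']
        have h3 := (hΨ n).2
        have h4 := ell_pos' Ψ hΨ n
        nlinarith
      linarith
    · have hmn : m = n := by omega
      subst hmn
      rw [Finset.Ico_self, Finset.sum_empty, ell_succ']
      have h1 := (hΨ m).2
      have h2 := ell_pos' Ψ hΨ m
      nlinarith

/-- Lemma 2.1: for a sequence `Ψ` with `0 < ψ_i < 1`, distinct strings
`𝔰 ≠ 𝔯` in `S_n` give disjoint closed cubes `Q̄(P^n_Ψ(𝔰), ℓ^n_Ψ)` and `Q̄(P^n_Ψ(𝔯), ℓ^n_Ψ)`. -/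
theorem statement4 (d n : ℕ) (hd : 1 ≤ d) (hn : 1 ≤ n)
    (Ψ : ℕ → ℝ) (hΨ : ∀ i, Ψ i ∈ Ioo (0 : ℝ) 1)
    (s r : Fin n → Fin d → ℝ) (hs : IsSignStr s) (hr : IsSignStr r) (hsr : s ≠ r) :
    Disjoint (cubeC d (Pfin d Ψ s) (ell Ψ n)) (cubeC d (Pfin d Ψ r) (ell Ψ n)) := by
  classical
  -- the set of indices where s and r differ
  have hne : (Finset.univ.filter (fun i : Fin n => s i ≠ r i)).Nonempty := by
    by_contra h
    apply hsr
    funext i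
    by_contra hi
    exact h ⟨i, Finset.mem_filter.mpr ⟨Finset.mem_univ i, hi⟩⟩
  set m := (Finset.univ.filter (fun i : Fin n => s i ≠ r i)).min' hne with hm_def
  have hm : s m ≠ r m :=
    (Finset.mem_filter.mp (Finset.min'_mem _ hne)).2
  have hmin : ∀ i : Fin n, i < m → s i = r i := by
    intro i hi
    by_contra hii
    exact absurd (Finset.min'_le _ i (Finset.mem_filter.mpr ⟨Finset.mem_univ i, hii⟩))
      (not_le.mpr hi)
  obtain ⟨j, hj⟩ : ∃ j, s m j ≠ r m j := Function.ne_iff.mp hm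
  set f : Fin n → ℝ := fun i => (s i j - r i j) * ell Ψ ↑i with hf_def
  have hellpos := ell_pos' Ψ hΨ
  have hfm : |f m| = 2 * ell Ψ ↑m := by
    have hp := hellpos (↑m : ℕ)
    rcases hs m j with h1 | h1 <;> rcases hr m j with h2 | h2 <;>
      simp only [hf_def, h1, h2] at hj ⊢ <;>
      first
        | exact absurd rfl hj
        | (rw [show (1:ℝ) - -1 = 2 by ring, abs_mul, abs_of_pos hp]; norm_num)
        | (rw [show (-1:ℝ) - 1 = -2 by ring, abs_mul, abs_of_pos hp]; norm_num)
  have hfub : ∀ i : Fin n, |f i| ≤ 2 * ell Ψ ↑i := by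
    intro i
    have hp := hellpos (↑i : ℕ)
    have h2 : |s i j - r i j| ≤ 2 := by
      rcases hs i j with h1 | h1 <;> rcases hr i j with h3 | h3 <;> rw [h1, h3] <;> norm_num
    calc |f i| = |s i j - r i j| * |ell Ψ ↑i| := abs_mul _ _
      _ ≤ 2 * |ell Ψ ↑i| := by
          exact mul_le_mul_of_nonneg_right h2 (abs_nonneg _)
      _ = 2 * ell Ψ ↑i := by rw [abs_of_pos hp]
  have hf0 : ∀ i : Fin n, i < m → f i = 0 := by
    intro i hi
    simp [hf_def, hmin i hi]
  -- sum over indices after m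
  have hsum_erase : ∑ i ∈ Finset.univ.erase m, |f i| ≤
      2 * ∑ k ∈ Finset.Ico ((m:ℕ) + 1) n, ell Ψ k := by
    have hsubset : Finset.univ.filter (fun i : Fin n => (↑m : ℕ) < ↑i) ⊆
        Finset.univ.erase m := by
      intro i hi
      simp only [Finset.mem_filter] at hi
      exact Finset.mem_erase.mpr ⟨fun h => by simp [h] at hi, Finset.mem_univ i⟩
    have heq : ∑ i ∈ Finset.univ.erase m, |f i| =
        ∑ i ∈ Finset.univ.filter (fun i : Fin n => (↑m : ℕ) < ↑i), |f i| := by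
      refine (Finset.sum_subset hsubset ?_).symm
      intro i hi hni
      simp only [Finset.mem_filter, Finset.mem_univ, true_and, not_lt] at hni
      have him : i ∉ ({m} : Finset (Fin n)) := by
        simpa using (Finset.mem_erase.mp hi).1
      have : i < m := by
        rw [Fin.lt_def]
        rcases lt_or_eq_of_le hni with h | h
        · exact h
        · exact absurd (Fin.ext h : i = m) (by simpa using him)
      rw [hf0 i this, abs_zero]
    rw [heq]
    calc ∑ i ∈ Finset.univ.filter (fun i : Fin n => (↑m : ℕ) < ↑i), |f i|
        ≤ ∑ i ∈ Finset.univ.filter (fun i : Fin n => (↑m : ℕ) < ↑i), 2 * ell Ψ ↑i :=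
          Finset.sum_le_sum fun i _ => hfub i
      _ = ∑ i : Fin n, (if (↑m : ℕ) < ↑i then 2 * ell Ψ ↑i else 0) := by
          rw [Finset.sum_filter]
      _ = ∑ k ∈ Finset.range n, (if (↑m : ℕ) < k then 2 * ell Ψ k else 0) :=
          Fin.sum_univ_eq_sum_range (fun k => if (↑m : ℕ) < k then 2 * ell Ψ k else 0) n
      _ = ∑ k ∈ (Finset.range n).filter (fun k => (↑m : ℕ) < k), 2 * ell Ψ k := by
          rw [Finset.sum_filter]
      _ = ∑ k ∈ Finset.Ico ((m:ℕ) + 1) n, 2 * ell Ψ k := by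
          congr 1
          ext k
          simp only [Finset.mem_filter, Finset.mem_range, Finset.mem_Ico]
          omega
      _ = 2 * ∑ k ∈ Finset.Ico ((m:ℕ) + 1) n, ell Ψ k := by
          rw [Finset.mul_sum]
  -- lower bound for the total sum
  have hkey := ell_key Ψ hΨ (↑m : ℕ) n m.isLt
  have hlow : 4 * ell Ψ n < |∑ i, f i| := by
    have hsplit : ∑ i, f i = f m + ∑ i ∈ Finset.univ.erase m, f i :=
      (Finset.add_sum_erase _ f (Finset.mem_univ m)).symm
    have h1 : |∑ i ∈ Finset.univ.erase m, f i| ≤ ∑ i ∈ Finset.univ.erase m, |f i| :=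
      Finset.abs_sum_le_sum_abs _ _
    have h2 : |f m| - |∑ i ∈ Finset.univ.erase m, f i| ≤ |∑ i, f i| := by
      rw [hsplit]
      have := abs_add_le (f m + ∑ i ∈ Finset.univ.erase m, f i) (-(∑ i ∈ Finset.univ.erase m, f i))
      simp only [add_neg_cancel_right, abs_neg] at this
      linarith
    rw [hfm] at h2
    linarith
  -- now disjointness
  rw [Set.disjoint_left]
  intro x hxs hxr
  have hbs : |x j - Pfin d Ψ s j| ≤ ell Ψ n / 2 := hxs j
  have hbr : |x j - Pfin d Ψ r j| ≤ ell Ψ n / 2 := hxr j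
  have hdiff : Pfin d Ψ s j - Pfin d Ψ r j = (1/4) * ∑ i, f i := by
    simp only [Pfin, hf_def]
    have hss : ∑ i : Fin n, (s i j - r i j) * ell Ψ ↑i =
        (∑ i : Fin n, s i j * ell Ψ ↑i) - ∑ i : Fin n, r i j * ell Ψ ↑i := by
      rw [← Finset.sum_sub_distrib]
      exact Finset.sum_congr rfl fun i _ => by ring
    rw [hss]
    ring
  have htri : |Pfin d Ψ s j - Pfin d Ψ r j| ≤ ell Ψ n := by
    calc |Pfin d Ψ s j - Pfin d Ψ r j|
        = |(x j - Pfin d Ψ r j) - (x j - Pfin d Ψ s j)| := by ring_nf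
      _ ≤ |x j - Pfin d Ψ r j| + |x j - Pfin d Ψ s j| := abs_sub _ _
      _ ≤ ell Ψ n := by linarith
  rw [hdiff, abs_mul] at htri
  rw [show |(1:ℝ)/4| = 1/4 by norm_num] at htri
  linarith

end
end

section
/- Let d ≥ 1 be an integer and let Ψ = (ψ_i)_{i≥1} be a sequence of reals with 0 < ψ_i < 1 for all i. If 𝔰 and 𝔯 are two distinct elements of 𝒮, then 𝒫_Ψ(𝔰) ≠ 𝒫_Ψ(𝔯); that is, the map 𝒫_Ψ : 𝒮 → ℝ^d is injective. -/
open MeasureTheory Set Filter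
open scoped ENNReal NNReal

noncomputable section

/-- Lemma 2.2: for a sequence `Ψ` with `0 < ψ_i < 1`, the map
`𝒫_Ψ : 𝒮 → ℝ^d` is injective on sign sequences. -/
theorem statement5 (d : ℕ) (hd : 1 ≤ d)
    (Ψ : ℕ → ℝ) (hΨ : ∀ i, Ψ i ∈ Ioo (0 : ℝ) 1)
    (s r : ℕ → Fin d → ℝ) (hs : IsSignSeq s) (hr : IsSignSeq r) (hsr : s ≠ r) :
    Pinf d Ψ s ≠ Pinf d Ψ r := by
  classical
  intro heq
  have hex : ∃ n, s n ≠ r n := Function.ne_iff.mp hsr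
  set n := Nat.find hex with hn_def
  have hn : s n ≠ r n := Nat.find_spec hex
  have hlt : ∀ m, m < n → s m = r m := by
    intro m hm
    by_contra h
    exact Nat.find_min hex hm h
  obtain ⟨j, hj⟩ := Function.ne_iff.mp hn
  -- basic facts about ell
  have ellpos : ∀ m, 0 < ell Ψ m := fun m =>
    div_pos (Finset.prod_pos fun i _ => (hΨ i).1) (by positivity)
  have ell_le : ∀ m, ell Ψ m ≤ (1/2 : ℝ) ^ m := by
    intro m
    have h1 : (∏ i ∈ Finset.range m, Ψ i) ≤ 1 :=
      Finset.prod_le_one (fun i _ => (hΨ i).1.le) (fun i _ => (hΨ i).2.le)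
    have h2 : (0:ℝ) < 2 ^ m := by positivity
    rw [ell, div_le_iff₀ h2, one_div, inv_pow, inv_mul_cancel₀ (ne_of_gt h2)]
    exact h1
  have hsum_ell : Summable (ell Ψ) :=
    Summable.of_nonneg_of_le (fun i => (ellpos i).le) ell_le
      (summable_geometric_of_lt_one (by norm_num) (by norm_num))
  have habs : ∀ (q : ℕ → Fin d → ℝ), IsSignSeq q →
      ∀ i, |q i j * ell Ψ i| = ell Ψ i := by
    intro q hq i
    rcases hq i j with h | h <;> rw [h] <;> simp [abs_of_pos (ellpos i)]
  have hsums : Summable (fun i => s i j * ell Ψ i) := by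
    apply Summable.of_abs
    simpa only [habs s hs] using hsum_ell
  have hsumr : Summable (fun i => r i j * ell Ψ i) := by
    apply Summable.of_abs
    simpa only [habs r hr] using hsum_ell
  -- the coordinate equality
  have hcoord : Pinf d Ψ s j = Pinf d Ψ r j := congrArg (fun x => x j) heq
  have hAB : (∑' i, s i j * ell Ψ i) = ∑' i, r i j * ell Ψ i := by
    simp only [Pinf, PiLp.toLp_apply] at hcoord
    linarith
  set f : ℕ → ℝ := fun i => (s i j - r i j) * ell Ψ i with hf
  have hfsum : Summable f := by
    have := hsums.sub hsumr
    convert this using 2 with i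
    · rfl
    simp [hf]; ring
  have hftsum : (∑' i, f i) = 0 := by
    have heqf : f = fun i => s i j * ell Ψ i - r i j * ell Ψ i := funext fun i => by
      simp only [hf]; ring
    rw [heqf, Summable.tsum_sub hsums hsumr, hAB, sub_self]
  -- split the sum
  have hsplit : (∑' i, f i) = (∑ i ∈ Finset.range (n+1), f i) + ∑' k, f (k + (n+1)) :=
    (Summable.sum_add_tsum_nat_add (n+1) hfsum).symm
  have hsum0 : (∑ i ∈ Finset.range (n+1), f i) = f n := by
    rw [Finset.sum_range_succ]
    have : (∑ i ∈ Finset.range n, f i) = 0 := by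
      apply Finset.sum_eq_zero
      intro i hi
      have : s i = r i := hlt i (Finset.mem_range.mp hi)
      simp [hf, this]
    rw [this, zero_add]
  -- |f n| = 2 * ell Ψ n
  have hfn : |f n| = 2 * ell Ψ n := by
    have h2 : |s n j - r n j| = 2 := by
      rcases hs n j with h | h <;> rcases hr n j with h' | h' <;>
        rw [h, h'] at hj ⊢ <;> norm_num at hj <;> norm_num
    rw [hf, abs_mul, h2, abs_of_pos (ellpos n)]
  -- tail bound
  have key : ∀ k, ell Ψ (k + (n+1)) ≤ ell Ψ n * Ψ n * (1/2) ^ (k+1) := by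
    intro k
    have heq2 : k + (n+1) = n + (k+1) := by omega
    have hprod : (∏ i ∈ Finset.range (n + (k+1)), Ψ i)
        = (∏ i ∈ Finset.range n, Ψ i) * ∏ i ∈ Finset.range (k+1), Ψ (n+i) :=
      Finset.prod_range_add Ψ n (k+1)
    have h2 : (∏ i ∈ Finset.range (k+1), Ψ (n+i)) ≤ Ψ n := by
      rw [Finset.prod_range_succ']
      simp only [Nat.add_zero]
      have h3 : (∏ i ∈ Finset.range k, Ψ (n+(i+1))) ≤ 1 :=
        Finset.prod_le_one (fun i _ => (hΨ _).1.le) (fun i _ => (hΨ _).2.le)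
      have h4 : (0:ℝ) ≤ Ψ n := (hΨ n).1.le
      nlinarith [Finset.prod_pos (fun i (_ : i ∈ Finset.range k) => (hΨ (n+(i+1))).1)]
    have hval : ell Ψ (k + (n+1)) =
        ell Ψ n * ((∏ i ∈ Finset.range (k+1), Ψ (n+i)) / 2 ^ (k+1)) := by
      rw [heq2, ell, ell, hprod, pow_add]
      field_simp
    rw [hval]
    have h5 : (0:ℝ) < 2 ^ (k+1) := by positivity
    have h6 : ((∏ i ∈ Finset.range (k+1), Ψ (n+i)) / 2 ^ (k+1)) ≤ Ψ n * (1/2)^(k+1) := by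
      rw [div_le_iff₀ h5, one_div, inv_pow]
      rw [mul_assoc, inv_mul_cancel₀ (ne_of_gt h5), mul_one]
      exact h2
    calc ell Ψ n * ((∏ i ∈ Finset.range (k+1), Ψ (n+i)) / 2 ^ (k+1))
        ≤ ell Ψ n * (Ψ n * (1/2)^(k+1)) := by
          exact mul_le_mul_of_nonneg_left h6 (ellpos n).le
      _ = ell Ψ n * Ψ n * (1/2)^(k+1) := by ring
  have hgeo : Summable (fun k : ℕ => ell Ψ n * Ψ n * (1/2 : ℝ) ^ (k+1)) := by
    apply Summable.mul_left
    exact (summable_geometric_of_lt_one (by norm_num) (by norm_num : (1/2:ℝ) < 1)).comp_injective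
      (add_left_injective 1)
  have htail_abs : (∑' k, |f (k + (n+1))|) ≤ 2 * (ell Ψ n * Ψ n) := by
    have hb : ∀ k, |f (k + (n+1))| ≤ 2 * (ell Ψ n * Ψ n * (1/2)^(k+1)) := by
      intro k
      have habs2 : |s (k+(n+1)) j - r (k+(n+1)) j| ≤ 2 := by
        rcases hs (k+(n+1)) j with h | h <;> rcases hr (k+(n+1)) j with h' | h' <;>
          rw [h, h'] <;> norm_num
      calc |f (k + (n+1))| = |s (k+(n+1)) j - r (k+(n+1)) j| * |ell Ψ (k+(n+1))| := by
            rw [hf]; exact abs_mul _ _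
        _ ≤ 2 * ell Ψ (k+(n+1)) := by
            rw [abs_of_pos (ellpos _)]
            exact mul_le_mul_of_nonneg_right habs2 (ellpos _).le
        _ ≤ 2 * (ell Ψ n * Ψ n * (1/2)^(k+1)) := by
            exact mul_le_mul_of_nonneg_left (key k) (by norm_num)
    have hsumtail : Summable (fun k => |f (k + (n+1))|) :=
      (hfsum.comp_injective (add_left_injective (n+1))).abs
    calc (∑' k, |f (k + (n+1))|) ≤ ∑' k, 2 * (ell Ψ n * Ψ n * (1/2:ℝ)^(k+1)) :=
          Summable.tsum_le_tsum hb hsumtail (hgeo.mul_left 2)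
      _ = 2 * (ell Ψ n * Ψ n) * ∑' k, (1/2:ℝ)^(k+1) := by
          rw [← tsum_mul_left]; congr 1; ext k; ring
      _ = 2 * (ell Ψ n * Ψ n) := by
          have : (∑' k : ℕ, (1/2:ℝ)^(k+1)) = 1 := by
            have h1 : (∑' k : ℕ, (1/2:ℝ)^(k+1)) = (1/2) * ∑' k : ℕ, (1/2:ℝ)^k := by
              rw [← tsum_mul_left]; congr 1; ext k; rw [pow_succ]; ring
            rw [h1, tsum_geometric_of_lt_one (by norm_num) (by norm_num)]
            norm_num
          rw [this, mul_one]
  -- conclude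
  have habs_tsum : |∑' k, f (k + (n+1))| ≤ ∑' k, |f (k + (n+1))| := by
    have := norm_tsum_le_tsum_norm (f := fun k => f (k + (n+1)))
      (by simpa [Real.norm_eq_abs] using (hfsum.comp_injective (add_left_injective (n+1))).abs)
    simpa [Real.norm_eq_abs] using this
  have htail : |∑' k, f (k + (n+1))| ≤ 2 * (ell Ψ n * Ψ n) :=
    le_trans habs_tsum htail_abs
  rw [hsplit, hsum0] at hftsum
  have hfneg : f n = -(∑' k, f (k + (n+1))) := by linarith
  have hkey : 2 * ell Ψ n = |∑' k, f (k + (n+1))| := by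
    rw [← hfn, hfneg, abs_neg]
  have hlt2 : 2 * (ell Ψ n * Ψ n) < 2 * ell Ψ n := by
    have := (hΨ n).2
    nlinarith [ellpos n]
  linarith [hkey ▸ htail]

end
end

section
/- Let d ≥ 1 be an integer, let Ψ = (ψ_i)_{i≥1} be a sequence of reals with 0 < ψ_i ≤ 1 for all i, let n ≥ 2 and 𝔰 = (s_1, …, s_n) ∈ S_n, and set 𝔰′ = (s_1, …, s_{n−1}) ∈ S_{n−1}. Then Q̄(P^n_Ψ(𝔰), ℓ^n_Ψ) ⊆ Q̄(P^{n−1}_Ψ(𝔰′), ℓ^{n−1}_Ψ). -/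
open MeasureTheory Set Filter
open scoped ENNReal NNReal

noncomputable section

/-- Lemma 2.4: for `0 < ψ_i ≤ 1` and a string `𝔰 ∈ S_{n+1}` (with
`n ≥ 1`, i.e. generation at least `2`), the cube `Q̄(P^{n+1}_Ψ(𝔰), ℓ^{n+1}_Ψ)` is contained
in the cube `Q̄(P^n_Ψ(𝔰′), ℓ^n_Ψ)` of its truncation `𝔰′`. -/
theorem statement7 (d n : ℕ) (hd : 1 ≤ d) (hn : 1 ≤ n)
    (Ψ : ℕ → ℝ) (hΨ : ∀ i, Ψ i ∈ Ioc (0 : ℝ) 1)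
    (s : Fin (n + 1) → Fin d → ℝ) (hs : IsSignStr s) :
    cubeC d (Pfin d Ψ s) (ell Ψ (n + 1)) ⊆
      cubeC d (Pfin d Ψ (fun i : Fin n => s i.castSucc)) (ell Ψ n) := by
  intro x hx j
  have hpos : ∀ m, 0 < ell Ψ m := by
    intro m
    apply div_pos (Finset.prod_pos fun i _ => (hΨ i).1)
    positivity
  have hstep : ell Ψ (n + 1) ≤ ell Ψ n / 2 := by
    have h1 : ell Ψ (n + 1) = ell Ψ n * Ψ n / 2 := by
      simp only [ell, Finset.prod_range_succ, pow_succ]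
      ring
    rw [h1]
    nlinarith [(hΨ n).1, (hΨ n).2, (hpos n).le]
  have hx' := hx j
  have hdiff : Pfin d Ψ s j - Pfin d Ψ (fun i : Fin n => s i.castSucc) j
      = (1 / 4) * (s (Fin.last n) j * ell Ψ n) := by
    simp only [Pfin, PiLp.toLp_apply, Fin.sum_univ_castSucc, Fin.coe_castSucc, Fin.val_last]
    ring
  have habs : |s (Fin.last n) j * ell Ψ n| = ell Ψ n := by
    rcases hs (Fin.last n) j with h | h
    · rw [h, one_mul, abs_of_nonneg (hpos n).le]
    · rw [h, neg_one_mul, abs_neg, abs_of_nonneg (hpos n).le]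
  have htri : |x j - Pfin d Ψ (fun i : Fin n => s i.castSucc) j|
      ≤ |x j - Pfin d Ψ s j| + |Pfin d Ψ s j - Pfin d Ψ (fun i : Fin n => s i.castSucc) j| :=
    abs_sub_le _ _ _
  rw [hdiff, abs_mul, habs] at htri
  have : |(1 : ℝ) / 4| = 1 / 4 := by norm_num
  rw [this] at htri
  linarith

end
end

section
/- Let d ≥ 1 and i ≥ 1 be integers, let ν ∈ (0,1), let Φ be the constant sequence ψ_k = 2^{−ν}, and set ϑ := (2^ν − 1)/8. Then for every a ∈ [0,1] and every 𝔰 ∈ S_i, the point x_a := (1−a) P̃^i_Φ(𝔰) + a P^i_Θ(𝔰) satisfies Q̄(x_a, (1+ϑ) ℓ^i_Φ) ⊆ Q(P^i_Θ(𝔰), 2^{−i}); in particular, the closed cube is compactly contained in the open dyadic cube. -/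
open MeasureTheory Set Filter
open scoped ENNReal NNReal

noncomputable section

/-- Lemma 2.11: with `ϑ = (2^ν − 1)/8`, for every `a ∈ [0,1]` and every
string `𝔰 ∈ S_{m+1}` (generation `i = m+1 ≥ 1`), the closed cube of side `(1+ϑ)ℓ^i_Φ`
centered at `x_a = (1−a)P̃^i_Φ(𝔰) + a P^i_Θ(𝔰)` is contained in the open dyadic cube
`Q(P^i_Θ(𝔰), 2^{−i})`. -/
theorem statement15 (d m : ℕ) (hd : 1 ≤ d) (ν : ℝ) (hν : ν ∈ Ioo (0 : ℝ) 1)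
    (a : ℝ) (ha : a ∈ Icc (0 : ℝ) 1)
    (s : Fin (m + 1) → Fin d → ℝ) (hs : IsSignStr s) :
    cubeC d ((1 - a) • Ptilde d (Phi ν) s + a • Pfin d Theta s)
        ((1 + ((2 : ℝ) ^ ν - 1) / 8) * ell (Phi ν) (m + 1)) ⊆
      cubeO d (Pfin d Theta s) (ell Theta (m + 1)) := by
  obtain ⟨hν0, hν1⟩ := hν
  obtain ⟨ha0, ha1⟩ := ha
  set c : ℝ := (2 : ℝ) ^ (-ν) with hc
  have hc0 : 0 < c := Real.rpow_pos_of_pos (by norm_num) _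
  have hc1 : c < 1 := by
    apply Real.rpow_lt_one_of_one_lt_of_neg (by norm_num) (by linarith)
  have ht1 : (1 : ℝ) < (2 : ℝ) ^ ν := by
    have := Real.rpow_lt_rpow_of_exponent_lt (show (1:ℝ) < 2 by norm_num)
      (show (0:ℝ) < ν from hν0)
    simpa using this
  have hcinv : c = ((2 : ℝ) ^ ν)⁻¹ := by
    rw [hc, Real.rpow_neg (by norm_num)]
  have hkey : (1 + ((2 : ℝ) ^ ν - 1) / 8) * c < 1 := by
    rw [hcinv]
    rw [mul_inv_lt_iff₀ (by linarith)]
    linarith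
  have hellP : ∀ n, ell (Phi ν) n = c ^ n / 2 ^ n := by
    intro n
    simp [ell, Phi, hc]
  have hellT : ∀ n, ell Theta n = 1 / 2 ^ n := by
    intro n
    simp [ell, Theta]
  set L : ℝ := ell (Phi ν) m with hLdef
  set M : ℝ := ell Theta m with hMdef
  have hL0 : 0 < L := by rw [hLdef, hellP]; positivity
  have hM0 : 0 < M := by rw [hMdef, hellT]; positivity
  have hLM : L ≤ M := by
    rw [hLdef, hMdef, hellP, hellT]
    have : c ^ m ≤ 1 := pow_le_one₀ hc0.le hc1.le
    gcongr
  have hPs : ell (Phi ν) (m + 1) = c * L / 2 := by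
    rw [hLdef, hellP, hellP, pow_succ, pow_succ]; ring
  have hTs : ell Theta (m + 1) = M / 2 := by
    rw [hMdef, hellT, hellT, pow_succ]; ring
  intro x hx
  intro j
  have hx' := hx j
  set z : EuclideanSpace ℝ (Fin d) := (1 - a) • Ptilde d (Phi ν) s + a • Pfin d Theta s with hz
  have hzj : z j - Pfin d Theta s j = (1 - a) * (1 / 4) * s (Fin.last m) j * (L - M) := by
    have h1 : z j = (1 - a) * Ptilde d (Phi ν) s j + a * Pfin d Theta s j := by
      simp [hz]
    have h2 : Ptilde d (Phi ν) s j =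
        1 / 2 + (1 / 4) * ((∑ i : Fin m, s i.castSucc j * ell (Phi ν) i)
          + s (Fin.last m) j * L) - Pfin d (Phi ν) (fun i : Fin m => s i.castSucc) j
          + Pfin d Theta (fun i : Fin m => s i.castSucc) j := by
      simp only [Ptilde, PiLp.add_apply, PiLp.sub_apply]
      congr 2
      simp only [Pfin, Fin.sum_univ_castSucc, Fin.coe_castSucc, Fin.val_last, hLdef, WithLp.ofLp_toLp]
    have h3 : Pfin d Theta s j =
        1 / 2 + (1 / 4) * ((∑ i : Fin m, s i.castSucc j * ell Theta i)
          + s (Fin.last m) j * M) := by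
      simp only [Pfin, Fin.sum_univ_castSucc, Fin.coe_castSucc, Fin.val_last, hMdef, WithLp.ofLp_toLp]
    rw [h1, h2, h3]
    simp only [Pfin, WithLp.ofLp_toLp]
    ring
  have habs : |z j - Pfin d Theta s j| ≤ (1 - a) * (1 / 4) * (M - L) := by
    rw [hzj]
    rw [abs_mul]
    have hs1 : |s (Fin.last m) j| = 1 := by
      rcases hs (Fin.last m) j with h | h <;> rw [h] <;> norm_num
    rw [abs_mul, abs_mul, hs1, abs_of_nonneg (by linarith : (0:ℝ) ≤ 1 - a),
      abs_of_nonneg (by norm_num : (0:ℝ) ≤ (1:ℝ)/4), abs_sub_comm,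
      abs_of_nonneg (by linarith : (0:ℝ) ≤ M - L)]
    exact le_of_eq (by ring)
  calc |x j - Pfin d Theta s j|
      ≤ |x j - z j| + |z j - Pfin d Theta s j| := abs_sub_le _ _ _
    _ ≤ (1 + ((2 : ℝ) ^ ν - 1) / 8) * ell (Phi ν) (m + 1) / 2
        + (1 - a) * (1 / 4) * (M - L) := add_le_add hx' habs
    _ < ell Theta (m + 1) / 2 := by
        rw [hPs, hTs]
        have h1 : (1 + ((2 : ℝ) ^ ν - 1) / 8) * c * L < L :=
          by nlinarith [mul_lt_mul_of_pos_right hkey hL0]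
        have h2 : (1 - a) * (M - L) ≤ M - L := by
          nlinarith
        nlinarith


end
end
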